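/- Let P be a measure on ℝ≥0 × ℝ≥0 with coordinates (g0, g1), let R be a measurable set with 0 < P(R) < ∞ and g0 integrable on R, let λ, μ ≥ 0 with λ·P(R) + μ·∫_R g0 dP > 0, and let p > 0 satisfy ∫_R g1/(1 + g1·p) dP = λ·P(R) + μ·∫_R g0 dP. Then p < P(R)/(λ·P(R) + μ·∫_R g0 dP). -/

import Mathlib

open MeasureTheory Real
open scoped NNReal

/-- A strictly positive power level satisfying the centroid optimality equation on a
region `R` is bounded above by `P(R)/(λ P(R) + μ ∫_R g0)`. -/
theorem power_level_upper_bound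
    (P : Measure (ℝ≥0 × ℝ≥0))
    (R : Set (ℝ≥0 × ℝ≥0)) (hRmeas : MeasurableSet R)
    (hRpos : 0 < P R) (hRfin : P R < ⊤)
    (hg0int : IntegrableOn (fun x => (x.1 : ℝ)) R P)
    (lam mu : ℝ) (hlam : 0 ≤ lam) (hmu : 0 ≤ mu)
    (hden : 0 < lam * (P R).toReal + mu * ∫ x in R, (x.1 : ℝ) ∂P)
    (p : ℝ) (hp : 0 < p)
    (heq : ∫ x in R, (x.2 : ℝ) / (1 + (x.2 : ℝ) * p) ∂P =
      lam * (P R).toReal + mu * ∫ x in R, (x.1 : ℝ) ∂P) :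
    p < (P R).toReal / (lam * (P R).toReal + mu * ∫ x in R, (x.1 : ℝ) ∂P) := by
  set D : ℝ := lam * (P R).toReal + mu * ∫ x in R, (x.1 : ℝ) ∂P with hD
  have hdenpos : ∀ x : ℝ≥0 × ℝ≥0, (0:ℝ) < 1 + (x.2 : ℝ) * p := by
    intro x
    have : (0:ℝ) ≤ (x.2 : ℝ) * p := mul_nonneg x.2.2 hp.le
    linarith
  have hmeas : Measurable fun x : ℝ≥0 × ℝ≥0 => (1 : ℝ) / (1 + (x.2 : ℝ) * p) := by
    apply Measurable.div measurable_const
    exact (measurable_const.add (((NNReal.continuous_coe.measurable.comp measurable_snd)).mul measurable_const))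
  have hmeas2 : Measurable fun x : ℝ≥0 × ℝ≥0 => (x.2 : ℝ) / (1 + (x.2 : ℝ) * p) := by
    apply Measurable.div (NNReal.continuous_coe.measurable.comp measurable_snd)
    exact (measurable_const.add (((NNReal.continuous_coe.measurable.comp measurable_snd)).mul measurable_const))
  have hRfin' : P R ≠ ⊤ := hRfin.ne
  -- integrability of 1/(1+g1 p) on R
  have hint1 : IntegrableOn (fun x : ℝ≥0 × ℝ≥0 => (1:ℝ) / (1 + (x.2 : ℝ) * p)) R P := by
    apply Measure.integrableOn_of_bounded hRfin' hmeas.aestronglyMeasurable (M := 1)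
    filter_upwards with x
    rw [Real.norm_eq_abs, abs_of_nonneg (by positivity)]
    rw [div_le_one (hdenpos x)]
    have : (0:ℝ) ≤ (x.2 : ℝ) * p := mul_nonneg x.2.2 hp.le
    linarith
  have hint2 : IntegrableOn (fun x : ℝ≥0 × ℝ≥0 => (x.2:ℝ) / (1 + (x.2 : ℝ) * p)) R P := by
    apply Measure.integrableOn_of_bounded hRfin' hmeas2.aestronglyMeasurable (M := 1/p)
    filter_upwards with x
    rw [Real.norm_eq_abs, abs_of_nonneg (div_nonneg x.2.coe_nonneg (hdenpos x).le)]
    rw [div_le_div_iff₀ (hdenpos x) hp]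
    have : (0:ℝ) ≤ (x.2 : ℝ) * p := mul_nonneg x.2.2 hp.le
    nlinarith [x.2.2]
  -- key computation: p * D = P(R) - ∫ 1/(1+g1 p)
  have hkey : p * D = (P R).toReal - ∫ x in R, (1:ℝ) / (1 + (x.2 : ℝ) * p) ∂P := by
    rw [← heq, mul_comm, ← integral_mul_const]
    have : ∀ x : ℝ≥0 × ℝ≥0, (x.2:ℝ) / (1 + (x.2:ℝ) * p) * p
        = 1 - 1 / (1 + (x.2:ℝ) * p) := by
      intro x
      field_simp
      ring
    simp_rw [this]
    rw [integral_sub (integrableOn_const (C := (1:ℝ)) hRfin') hint1,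
      setIntegral_const, smul_eq_mul, mul_one, measureReal_def]
  -- positivity of ∫ 1/(1+g1 p)
  have hpos : 0 < ∫ x in R, (1:ℝ) / (1 + (x.2 : ℝ) * p) ∂P := by
    rw [setIntegral_pos_iff_support_of_nonneg_ae _ hint1]
    · have : (Function.support fun x : ℝ≥0 × ℝ≥0 => (1:ℝ) / (1 + (x.2:ℝ) * p)) = Set.univ := by
        ext x
        simp only [Function.mem_support, Set.mem_univ, iff_true]
        exact ne_of_gt (div_pos one_pos (hdenpos x))
      rw [this, Set.univ_inter]
      exact hRpos
    · filter_upwards with x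
      exact div_nonneg one_pos.le (hdenpos x).le
  have hlt : p * D < (P R).toReal := by
    rw [hkey]; linarith
  exact (lt_div_iff₀ hden).mpr hlt
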